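/- If c is a positive definite real symmetric m×m matrix, then the Schrödinger representation 𝒲_c of the Heisenberg group H_ℝ^{(n,m)} on L²(ℝ^{m×n}) is irreducible: any closed subspace invariant under all operators 𝒲_c(h) is {0} or the whole space. -/

import Mathlib

open MeasureTheory
open Matrix

noncomputable section

/-- Triples `(λ, μ; κ)` underlying the Heisenberg group `H_ℝ^{(n,m)}`. -/
abbrev Htriple (n m : ℕ) :=
  Matrix (Fin m) (Fin n) ℝ × Matrix (Fin m) (Fin n) ℝ × Matrix (Fin m) (Fin m) ℝ

/-- The condition `κ + μ·ᵗλ` symmetric defining `H_ℝ^{(n,m)}`. -/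
def hCond {n m : ℕ} (a : Htriple n m) : Prop := (a.2.2 + a.2.1 * a.1ᵀ).IsSymm

/-- The Heisenberg multiplication
`(λ,μ;κ)∘(λ',μ';κ') = (λ+λ', μ+μ', κ+κ'+λᵗμ' − μᵗλ')`. -/
def hMul {n m : ℕ} (a b : Htriple n m) : Htriple n m :=
  (a.1 + b.1, a.2.1 + b.2.1, a.2.2 + b.2.2 + a.1 * b.2.1ᵀ - a.2.1 * b.1ᵀ)

/-- The inverse formula `(λ,μ;κ)⁻¹ = (−λ,−μ; −κ+λᵗμ−μᵗλ)`. -/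
def hInv {n m : ℕ} (a : Htriple n m) : Htriple n m :=
  (-a.1, -a.2.1, -a.2.2 + a.1 * a.2.1ᵀ - a.2.1 * a.1ᵀ)

/-- The Schrödinger representation operator
`(𝒲_c(λ₀,μ₀;κ₀)f)(λ) = exp(πi·tr(c(κ₀+μ₀ᵗλ₀+2λᵗμ₀)))·f(λ+λ₀)`. -/
def W {n m : ℕ} (c : Matrix (Fin m) (Fin m) ℝ) (h : Htriple n m)
    (f : (Fin m → Fin n → ℝ) → ℂ) : (Fin m → Fin n → ℝ) → ℂ :=
  fun x =>
    Complex.exp ((Real.pi : ℂ) * Complex.I *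
        (((c * (h.2.2 + h.2.1 * h.1ᵀ + (2 : ℝ) • (Matrix.of x * h.2.1ᵀ))).trace : ℝ))) *
      f (fun i j => x i j + h.1 i j)

/-! ### Auxiliary material for the irreducibility proof -/

open scoped FourierTransform RealInnerProductSpace SchwartzMap ComplexConjugate ENNReal

set_option maxHeartbeats 1600000

def matLin (m n : ℕ) : ((Σ _ : Fin m, Fin n) → ℝ) ≃ₗ[ℝ] (Fin m → Fin n → ℝ) where
  toFun y i j := y ⟨i, j⟩
  invFun x p := x p.1 p.2
  left_inv y := by funext p; cases p; rfl
  right_inv x := rfl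
  map_add' _ _ := rfl
  map_smul' _ _ := rfl

def matMeq (m n : ℕ) : ((Σ _ : Fin m, Fin n) → ℝ) ≃ᵐ (Fin m → Fin n → ℝ) where
  toEquiv := (matLin m n).toEquiv
  measurable_toFun := by
    exact measurable_pi_lambda _ fun i => measurable_pi_lambda _ fun j => measurable_pi_apply _
  measurable_invFun := by
    exact measurable_pi_lambda _ fun p => (measurable_pi_apply p.2).comp (measurable_pi_apply p.1)

lemma matMeq_mp (m n : ℕ) : MeasurePreserving (matMeq m n) volume volume := by
  refine ⟨(matMeq m n).measurable, ?_⟩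
  set μ' := (volume : Measure ((Σ _ : Fin m, Fin n) → ℝ)).map (matMeq m n) with hμ'
  have hco : ⇑((matLin m n).toContinuousLinearEquiv) = ⇑(matMeq m n) := rfl
  haveI : μ'.IsAddHaarMeasure := by
    have := (matLin m n).toContinuousLinearEquiv.isAddHaarMeasure_map
      (volume : Measure ((Σ _ : Fin m, Fin n) → ℝ))
    rwa [hco] at this
  haveI : (volume : Measure (Fin m → Fin n → ℝ)).IsAddHaarMeasure := Measure.pi.isAddHaarMeasure _
  have key := μ'.isAddLeftInvariant_eq_smul volume
  set c := μ'.addHaarScalarFactor volume with hc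
  -- evaluate on a box
  set B : Set (Fin m → Fin n → ℝ) := Set.pi Set.univ fun _ => Set.pi Set.univ fun _ => Set.Icc (0:ℝ) 1 with hB
  have hBmeas : MeasurableSet B :=
    MeasurableSet.univ_pi fun _ => MeasurableSet.univ_pi fun _ => measurableSet_Icc
  have hpre : (matMeq m n) ⁻¹' B = Set.pi Set.univ fun _ => Set.Icc (0:ℝ) 1 := by
    ext y
    simp only [Set.mem_preimage, hB, Set.mem_pi, Set.mem_univ, forall_true_left, true_implies]
    constructor
    · intro h p; exact h p.1 p.2
    · intro h i j; exact h ⟨i, j⟩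
  have h1 : μ' B = 1 := by
    rw [hμ', MeasurableEquiv.map_apply, hpre, volume_pi_pi]
    simp [Real.volume_Icc]
  have h2 : (volume : Measure (Fin m → Fin n → ℝ)) B = 1 := by
    rw [hB, volume_pi_pi]
    have : ∀ _i : Fin m, (volume : Measure (Fin n → ℝ)) (Set.pi Set.univ fun _ => Set.Icc (0:ℝ) 1) = 1 := by
      intro i; rw [volume_pi_pi]; simp [Real.volume_Icc]
    simp [this, Real.volume_Icc_pi, Real.volume_Icc]
  have hc1 : c • (1 : ℝ≥0∞) = 1 := by
    have := congrArg (fun μ => μ B) key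
    simp only [Measure.smul_apply] at this
    rw [h1, h2] at this
    exact this.symm
  rw [key]
  have hcc : (c : ℝ≥0∞) = 1 := by simpa [ENNReal.smul_def] using hc1
  have : c = 1 := by exact_mod_cast hcc
  rw [this, one_smul]


lemma matMeq_apply {m n : ℕ} (y : (Σ _ : Fin m, Fin n) → ℝ) (i : Fin m) (j : Fin n) :
  matMeq m n y i j = y ⟨i, j⟩ := rfl

def schwartzOfCompactSupport {V : Type*} [NormedAddCommGroup V] [NormedSpace ℝ V]
    (g : V → ℂ) (h1 : ContDiff ℝ ((⊤ : ℕ∞) : WithTop ℕ∞) g) (h2 : HasCompactSupport g) : SchwartzMap V ℂ where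
  toFun := g
  smooth' := h1
  decay' := by
    intro k N
    have hcont : Continuous fun x : V => ‖x‖ ^ k * ‖iteratedFDeriv ℝ N g x‖ :=
      (continuous_norm.pow k).mul (h1.continuous_iteratedFDeriv (show ((N : ℕ∞) : WithTop ℕ∞) ≤ ((⊤ : ℕ∞) : WithTop ℕ∞) by exact_mod_cast le_top)).norm
    have hn : HasCompactSupport fun x : V => ‖iteratedFDeriv ℝ N g x‖ := by
      have := (h2.iteratedFDeriv N).comp_left (g := fun y : (V [×N]→L[ℝ] ℂ) => ‖y‖) norm_zero
      simpa [Function.comp_def] using this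
    have hsupp : HasCompactSupport fun x : V => ‖x‖ ^ k * ‖iteratedFDeriv ℝ N g x‖ :=
      hn.mul_left
    obtain ⟨C, hC⟩ := hcont.bounded_above_of_compact_support hsupp
    exact ⟨C, fun x => by simpa using hC x⟩

lemma ae_zero_of_fourier_zero {ι : Type*} [Fintype ι]
    {F : EuclideanSpace ℝ ι → ℂ} (hF : Integrable F) (h : ∀ ξ, 𝓕 F ξ = 0) :
    ∀ᵐ x : EuclideanSpace ℝ ι, F x = 0 := by
  have flip_eq : (innerₗ (EuclideanSpace ℝ ι)).flip = innerₗ (EuclideanSpace ℝ ι) := by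
    apply LinearMap.ext; intro x; apply LinearMap.ext; intro y
    exact real_inner_comm x y
  have key : ∀ φ : SchwartzMap (EuclideanSpace ℝ ι) ℂ, ∫ x, F x • (𝓕 ⇑φ) x = 0 := by
    intro φ
    have h2 := VectorFourier.integral_fourierIntegral_smul_eq_flip
      (e := Real.fourierChar) (L := innerₗ (EuclideanSpace ℝ ι)) (μ := volume) (ν := volume)
      Real.continuous_fourierChar continuous_inner hF φ.integrable
    rw [flip_eq] at h2
    refine Eq.trans h2.symm ?_
    have : ∀ ξ, VectorFourier.fourierIntegral Real.fourierChar volume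
        (innerₗ (EuclideanSpace ℝ ι)) F ξ = 0 := h
    simp [this]
  have key2 : ∀ φ : SchwartzMap (EuclideanSpace ℝ ι) ℂ, ∫ x, F x * φ x = 0 := by
    intro φ
    have h3 := key ((FourierTransform.fourierCLE ℂ (SchwartzMap (EuclideanSpace ℝ ι) ℂ)).symm φ)
    have h4 : 𝓕 ⇑((FourierTransform.fourierCLE ℂ (SchwartzMap (EuclideanSpace ℝ ι) ℂ)).symm φ) = ⇑φ := by
      have := (FourierTransform.fourierCLE ℂ (SchwartzMap (EuclideanSpace ℝ ι) ℂ)).apply_symm_apply φ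
      calc 𝓕 ⇑((FourierTransform.fourierCLE ℂ (SchwartzMap (EuclideanSpace ℝ ι) ℂ)).symm φ)
          = ⇑((FourierTransform.fourierCLE ℂ (SchwartzMap (EuclideanSpace ℝ ι) ℂ)) ((FourierTransform.fourierCLE ℂ (SchwartzMap (EuclideanSpace ℝ ι) ℂ)).symm φ)) := rfl
        _ = ⇑φ := by rw [this]
    rw [h4] at h3
    simpa [smul_eq_mul] using h3
  apply ae_eq_zero_of_integral_contDiff_smul_eq_zero hF.locallyIntegrable
  intro g hg hgsupp
  have h1 : ContDiff ℝ ((⊤ : ℕ∞) : WithTop ℕ∞) (fun x => (g x : ℂ)) :=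
    Complex.ofRealCLM.contDiff.comp hg
  have h2 : HasCompactSupport (fun x => (g x : ℂ)) := by
    have := hgsupp.comp_left (g := Complex.ofReal) Complex.ofReal_zero
    simpa [Function.comp_def] using this
  have h5 := key2 (schwartzOfCompactSupport _ h1 h2)
  have h6 : ∀ x, g x • F x = F x * ((schwartzOfCompactSupport _ h1 h2) x) := by
    intro x
    show g x • F x = F x * (g x : ℂ)
    rw [mul_comm]
    simp [Complex.real_smul]
  simpa [h6] using h5


lemma trace_formula {m n : ℕ} (c : Matrix (Fin m) (Fin m) ℝ) (μ0 : Matrix (Fin m) (Fin n) ℝ)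
    (x : Fin m → Fin n → ℝ) :
    (c * (Matrix.of x * μ0ᵀ)).trace = ∑ k, ∑ j, x k j * (cᵀ * μ0) k j := by
  rw [Matrix.trace]
  simp only [Matrix.diag_apply, Matrix.mul_apply, Matrix.transpose_apply, Matrix.of_apply,
    Finset.mul_sum, Finset.sum_mul]
  rw [Finset.sum_comm]
  refine Finset.sum_congr rfl fun k _ => ?_
  rw [Finset.sum_comm]
  refine Finset.sum_congr rfl fun j _ => ?_
  refine Finset.sum_congr rfl fun i _ => ?_
  ring

lemma matrix_fourier_ae_zero {m n : ℕ} {F : (Fin m → Fin n → ℝ) → ℂ} (hF : Integrable F)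
    (h : ∀ ξ : Fin m → Fin n → ℝ,
      ∫ x : Fin m → Fin n → ℝ,
        Complex.exp (((-2 * Real.pi * (∑ i, ∑ j, x i j * ξ i j) : ℝ) : ℂ) * Complex.I) * F x = 0) :
    ∀ᵐ x : (Fin m → Fin n → ℝ), F x = 0 := by
  set ι := ((_ : Fin m) × Fin n) with hι
  set meqΦ : EuclideanSpace ℝ ι ≃ᵐ (Fin m → Fin n → ℝ) :=
    (MeasurableEquiv.toLp 2 (ι → ℝ)).symm.trans (matMeq m n) with hmeq
  have mpΦ : MeasurePreserving (⇑meqΦ) volume volume := by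
    rw [hmeq, MeasurableEquiv.coe_trans]
    exact (matMeq_mp m n).comp (EuclideanSpace.volume_preserving_symm_measurableEquiv_toLp ι)
  have hGint : Integrable (F ∘ ⇑meqΦ) volume := (mpΦ.integrable_comp_emb meqΦ.measurableEmbedding).2 hF
  have hinner : ∀ v w : EuclideanSpace ℝ ι,
      (inner ℝ v w : ℝ) = ∑ i, ∑ j, (meqΦ v) i j * (meqΦ w) i j := by
    intro v w
    rw [PiLp.inner_apply]
    rw [← Finset.sum_sigma (Finset.univ) (fun _ => Finset.univ)
      (fun p : ι => (meqΦ v) p.1 p.2 * (meqΦ w) p.1 p.2)]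
    refine Finset.sum_congr rfl fun p _ => ?_
    have hv : (meqΦ v) p.1 p.2 = v p := by
      simp only [hmeq, MeasurableEquiv.trans_apply]
      rw [matMeq_apply]
      rfl
    have hw : (meqΦ w) p.1 p.2 = w p := by
      simp only [hmeq, MeasurableEquiv.trans_apply]
      rw [matMeq_apply]
      rfl
    rw [hv, hw]
    simp [RCLike.inner_apply, mul_comm]
  have hG : ∀ ξ, 𝓕 (F ∘ ⇑meqΦ) ξ = 0 := by
    intro ξ
    rw [Real.fourier_eq']
    have step : ∀ v : EuclideanSpace ℝ ι,
        Complex.exp ((((-2 : ℝ) * Real.pi * (inner ℝ v ξ : ℝ) : ℝ) : ℂ) * Complex.I) • (F ∘ ⇑meqΦ) v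
        = (fun x => Complex.exp (((-2 * Real.pi *
            (∑ i, ∑ j, x i j * (meqΦ ξ) i j) : ℝ) : ℂ) * Complex.I) * F x) (meqΦ v) := by
      intro v
      rw [smul_eq_mul, hinner v ξ]
      rfl
    calc (∫ v, Complex.exp ((((-2 : ℝ) * Real.pi * (inner ℝ v ξ : ℝ) : ℝ) : ℂ) * Complex.I) • (F ∘ ⇑meqΦ) v)
        = ∫ v, (fun x => Complex.exp (((-2 * Real.pi *
            (∑ i, ∑ j, x i j * (meqΦ ξ) i j) : ℝ) : ℂ) * Complex.I) * F x) (meqΦ v) := by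
          exact integral_congr_ae (Filter.Eventually.of_forall step)
      _ = 0 := (mpΦ.integral_comp meqΦ.measurableEmbedding _).trans (h (meqΦ ξ))
  have hae := ae_zero_of_fourier_zero hGint hG
  have h0 : (F ∘ ⇑meqΦ) =ᵐ[(volume : Measure (EuclideanSpace ℝ ι))] (fun _ => 0) := hae
  have h1 := h0.comp_tendsto (mpΦ.symm meqΦ).quasiMeasurePreserving.tendsto_ae
  rw [show (F ∘ ⇑meqΦ) ∘ ⇑meqΦ.symm = F from funext fun x => by simp] at h1
  exact h1

/-- If `c` is positive definite symmetric then the Schrödinger representation `𝒲_c` of the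
Heisenberg group on `L²(ℝ^{m×n})` is irreducible: every closed invariant subspace is
`{0}` or the whole space. -/
theorem schrodinger_irreducible {n m : ℕ} (c : Matrix (Fin m) (Fin m) ℝ)
    (hc : c.IsSymm) (hcpos : c.PosDef)
    (V : Submodule ℂ (Lp ℂ 2 (volume : Measure (Fin m → Fin n → ℝ))))
    (hclosed : IsClosed (V : Set (Lp ℂ 2 (volume : Measure (Fin m → Fin n → ℝ)))))
    (hinv : ∀ h : Htriple n m, hCond h →
      ∀ f : Lp ℂ 2 (volume : Measure (Fin m → Fin n → ℝ)), f ∈ V →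
        ∀ g : Lp ℂ 2 (volume : Measure (Fin m → Fin n → ℝ)),
          (⇑g) =ᵐ[(volume : Measure (Fin m → Fin n → ℝ))] W c h (⇑f) → g ∈ V) :
    V = ⊥ ∨ V = ⊤ := by
  classical
  by_cases hbot : V = ⊥
  · exact Or.inl hbot
  right
  haveI : CompleteSpace V := hclosed.completeSpace_coe
  by_contra htop
  have horth : Vᗮ ≠ ⊥ := fun h0 => htop (Submodule.orthogonal_eq_bot_iff.1 h0)
  obtain ⟨f₀, hf₀V, hf₀⟩ := Submodule.exists_mem_ne_zero_of_ne_bot hbot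
  obtain ⟨g₀, hg₀V, hg₀⟩ := Submodule.exists_mem_ne_zero_of_ne_bot horth
  have hdet : IsUnit c.det := isUnit_iff_ne_zero.2 hcpos.det_pos.ne'
  -- key step: for every translation ℓ, the product vanishes a.e.
  have key : ∀ ℓ : Fin m → Fin n → ℝ, ∀ᵐ x : Fin m → Fin n → ℝ,
      conj (⇑f₀ (x + ℓ)) * ⇑g₀ x = 0 := by
    intro ℓ
    have hτmp : MeasurePreserving (fun x : Fin m → Fin n → ℝ => x + ℓ) volume volume :=
      measurePreserving_add_right volume ℓ
    set fT := Lp.compMeasurePreserving (E := ℂ) (p := 2) _ hτmp f₀ with hfTdef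
    have hfTcoe : ⇑fT =ᵐ[volume] fun x => ⇑f₀ (x + ℓ) :=
      Lp.coeFn_compMeasurePreserving f₀ hτmp
    set F : (Fin m → Fin n → ℝ) → ℂ := fun x => conj (⇑fT x) * ⇑g₀ x with hFdef
    have hFint : Integrable F volume := by
      have := L2.integrable_inner (𝕜 := ℂ) fT g₀
      simpa [hFdef, RCLike.inner_apply, mul_comm] using this
    have hzero : ∀ ξ : Fin m → Fin n → ℝ,
        ∫ x : Fin m → Fin n → ℝ,
          Complex.exp (((-2 * Real.pi * (∑ i, ∑ j, x i j * ξ i j) : ℝ) : ℂ) * Complex.I) * F x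
          = 0 := by
      intro ξ
      set μ0 : Matrix (Fin m) (Fin n) ℝ := c⁻¹ * Matrix.of ξ with hμ0
      have hξ : cᵀ * μ0 = Matrix.of ξ := by
        rw [hμ0, hc]
        exact Matrix.mul_nonsing_inv_cancel_left _ _ hdet
      set h0 : Htriple n m := (Matrix.of ℓ, μ0, -(μ0 * (Matrix.of ℓ)ᵀ)) with hh0
      have hcond : hCond h0 := by
        show ((-(μ0 * (Matrix.of ℓ)ᵀ) + μ0 * (Matrix.of ℓ)ᵀ)).IsSymm
        rw [neg_add_cancel]
        simp [Matrix.IsSymm]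
      set E : (Fin m → Fin n → ℝ) → ℂ := fun x =>
        Complex.exp ((Real.pi : ℂ) * Complex.I *
          (((c * (h0.2.2 + h0.2.1 * h0.1ᵀ + (2 : ℝ) • (Matrix.of x * h0.2.1ᵀ))).trace : ℝ)))
        with hEdef
      have hWfun : W c h0 ⇑f₀ = fun x => E x * ⇑f₀ (x + ℓ) := rfl
      have htr : ∀ x : Fin m → Fin n → ℝ,
          (c * (h0.2.2 + h0.2.1 * h0.1ᵀ + (2 : ℝ) • (Matrix.of x * h0.2.1ᵀ))).trace
            = 2 * ∑ i, ∑ j, x i j * ξ i j := by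
        intro x
        have h1 : h0.2.2 + h0.2.1 * h0.1ᵀ = 0 := neg_add_cancel _
        rw [show h0.2.2 + h0.2.1 * h0.1ᵀ + (2 : ℝ) • (Matrix.of x * h0.2.1ᵀ)
            = (2 : ℝ) • (Matrix.of x * μ0ᵀ) by rw [h1, zero_add]]
        rw [Matrix.mul_smul, Matrix.trace_smul, trace_formula c μ0 x, hξ]
        simp [smul_eq_mul]
      have hEconj : ∀ x : Fin m → Fin n → ℝ,
          conj (E x) = Complex.exp
            (((-2 * Real.pi * (∑ i, ∑ j, x i j * ξ i j) : ℝ) : ℂ) * Complex.I) := by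
        intro x
        simp only [hEdef]
        rw [← Complex.exp_conj]
        congr 1
        rw [htr x]
        simp only [_root_.map_mul, Complex.conj_I, Complex.conj_ofReal]
        push_cast
        ring
      have hEnorm : ∀ x, ‖E x‖ = 1 := by
        intro x
        simp only [hEdef]
        have : (Real.pi : ℂ) * Complex.I *
            (((c * (h0.2.2 + h0.2.1 * h0.1ᵀ + (2 : ℝ) • (Matrix.of x * h0.2.1ᵀ))).trace : ℝ) : ℂ)
            = ((Real.pi * (c * (h0.2.2 + h0.2.1 * h0.1ᵀ +
              (2 : ℝ) • (Matrix.of x * h0.2.1ᵀ))).trace : ℝ) : ℂ) * Complex.I := by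
          push_cast; ring
        rw [this]
        rw [Complex.norm_exp_ofReal_mul_I]
      have hScont : Continuous fun x : Fin m → Fin n → ℝ => ∑ i, ∑ j, x i j * ξ i j :=
        continuous_finset_sum _ fun i _ => continuous_finset_sum _ fun j _ =>
          (continuous_apply_apply i j).mul continuous_const
      have hEcont : Continuous E := by
        have hE2 : E = fun x => Complex.exp ((Real.pi : ℂ) * Complex.I *
            ((2 * ∑ i, ∑ j, x i j * ξ i j : ℝ) : ℂ)) := funext fun x => by
          simp only [hEdef]; rw [htr x]
        rw [hE2]
        exact Complex.continuous_exp.comp (continuous_const.mul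
          (Complex.continuous_ofReal.comp (continuous_const.mul hScont)))
      have hmemT : MemLp (fun x => ⇑f₀ (x + ℓ)) 2 volume := (Lp.memLp fT).ae_eq hfTcoe
      have hmemW : MemLp (W c h0 ⇑f₀) 2 volume := by
        refine MemLp.of_le hmemT ?_ (Filter.Eventually.of_forall fun x => ?_)
        · rw [hWfun]
          exact hEcont.aestronglyMeasurable.mul hmemT.aestronglyMeasurable
        · rw [hWfun]
          simp [norm_mul, hEnorm x]
      set gW := hmemW.toLp _ with hgWdef
      have hgWcoe : ⇑gW =ᵐ[volume] W c h0 ⇑f₀ := hmemW.coeFn_toLp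
      have hgWV : gW ∈ V := hinv h0 hcond f₀ hf₀V gW hgWcoe
      have hinner0 : (inner ℂ gW g₀ : ℂ) = 0 := (Submodule.mem_orthogonal V g₀).1 hg₀V gW hgWV
      have hint0 : ∫ x, conj (W c h0 ⇑f₀ x) * ⇑g₀ x = 0 := by
        rw [← hinner0, L2.inner_def]
        apply integral_congr_ae
        filter_upwards [hgWcoe] with x hx
        rw [RCLike.inner_apply, hx, mul_comm]
      rw [← hint0]
      apply integral_congr_ae
      filter_upwards [hfTcoe] with x hx
      rw [hFdef]
      show Complex.exp _ * (conj (⇑fT x) * ⇑g₀ x) = _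
      rw [hx, hWfun]
      show _ = conj (E x * ⇑f₀ (x + ℓ)) * ⇑g₀ x
      rw [_root_.map_mul, hEconj x]
      ring
    have hFae := matrix_fourier_ae_zero hFint hzero
    filter_upwards [hFae, hfTcoe] with x h1 h2
    rw [hFdef] at h1
    simp only at h1
    rw [h2] at h1
    exact h1
  -- Tonelli argument
  have hfm : Measurable (⇑f₀) := (Lp.stronglyMeasurable f₀).measurable
  have hgm : Measurable (⇑g₀) := (Lp.stronglyMeasurable g₀).measurable
  have hkey2 : ∀ ℓ : Fin m → Fin n → ℝ,
      (∫⁻ x, ((‖⇑f₀ (x + ℓ)‖₊ : ℝ≥0∞) * (‖⇑g₀ x‖₊ : ℝ≥0∞))) = 0 := by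
    intro ℓ
    have hm1 : Measurable fun x : Fin m → Fin n → ℝ =>
        ((‖⇑f₀ (x + ℓ)‖₊ : ℝ≥0∞) * (‖⇑g₀ x‖₊ : ℝ≥0∞)) :=
      ((hfm.comp (measurable_add_const ℓ)).enorm).mul hgm.enorm
    rw [lintegral_eq_zero_iff hm1]
    filter_upwards [key ℓ] with x hx
    rcases mul_eq_zero.1 hx with h | h
    · have : ⇑f₀ (x + ℓ) = 0 := by simpa using h
      simp [this]
    · simp [h]
  have hswap := lintegral_lintegral_swap (μ := (volume : Measure (Fin m → Fin n → ℝ)))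
    (ν := (volume : Measure (Fin m → Fin n → ℝ)))
    (f := fun ℓ x => ((‖⇑f₀ (x + ℓ)‖₊ : ℝ≥0∞) * (‖⇑g₀ x‖₊ : ℝ≥0∞)))
    (((hfm.comp (measurable_snd.add measurable_fst)).enorm.mul
      (hgm.comp measurable_snd).enorm).aemeasurable)
  rw [lintegral_congr fun ℓ => hkey2 ℓ, lintegral_zero] at hswap
  have hinner2 : ∀ x : Fin m → Fin n → ℝ,
      (∫⁻ ℓ, ((‖⇑f₀ (x + ℓ)‖₊ : ℝ≥0∞) * (‖⇑g₀ x‖₊ : ℝ≥0∞)))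
        = (∫⁻ y, (‖⇑f₀ y‖₊ : ℝ≥0∞)) * (‖⇑g₀ x‖₊ : ℝ≥0∞) := by
    intro x
    have hm2 : Measurable fun l : Fin m → Fin n → ℝ => ((‖⇑f₀ (x + l)‖₊ : ℝ≥0∞)) :=
      (hfm.comp (measurable_const_add x)).enorm
    rw [lintegral_mul_const _ hm2]
    congr 1
    exact (measurePreserving_add_left volume x).lintegral_comp hfm.enorm
  rw [lintegral_congr hinner2] at hswap
  rw [lintegral_const_mul (f := fun x => (‖⇑g₀ x‖₊ : ℝ≥0∞)) _ hgm.enorm] at hswap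
  rcases mul_eq_zero.1 hswap.symm with h | h
  · refine hf₀ (Lp.eq_zero_iff_ae_eq_zero.2 ?_)
    have := (lintegral_eq_zero_iff hfm.enorm).1 h
    filter_upwards [this] with y hy
    simpa using hy
  · refine hg₀ (Lp.eq_zero_iff_ae_eq_zero.2 ?_)
    have := (lintegral_eq_zero_iff hgm.enorm).1 h
    filter_upwards [this] with y hy
    simpa using hy
end
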